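/- arXiv:1503.07076 — 5 statements merged into one kernel-verified Lean document; each statement's English description precedes it below -/
import Mathlib

section
/- For Z as above and the Euclidean carré du champ Γ(f,g) = ∇f·∇g on ℝ², one has Γ(Z,Z) = Z̄ − Z², Γ(Z̄,Z̄) = Z − Z̄², and Γ(Z,Z̄) = (1/2)(1 − ZZ̄). -/
/-- For `Z(z) = (1/3)(e^{i(1·z)} + e^{i(j·z)} + e^{i(j̄·z)})` and the Euclidean
carré du champ `Γ(F,G) = ∂ₓF ∂ₓG + ∂_yF ∂_yG` (extended complex-bilinearly),
one has `Γ(Z,Z) = Z̄ - Z²`, `Γ(Z̄,Z̄) = Z - Z̄²` and `Γ(Z,Z̄) = (1 - ZZ̄)/2`. -/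
theorem deltoid_carre_du_champ
    (j : ℂ) (hj : j = Complex.exp (2 * Real.pi * Complex.I / 3))
    (dot : ℂ → ℂ → ℝ) (hdot : ∀ w z : ℂ, dot w z = ((starRingEnd ℂ) w * z).re)
    (Z : ℂ → ℂ)
    (hZ : ∀ z : ℂ, Z z = (Complex.exp (Complex.I * (dot 1 z : ℝ))
        + Complex.exp (Complex.I * (dot j z : ℝ))
        + Complex.exp (Complex.I * (dot ((starRingEnd ℂ) j) z : ℝ))) / 3)
    (Dx Dy : (ℂ → ℂ) → ℂ → ℂ)
    (hDx : ∀ (F : ℂ → ℂ) (z : ℂ),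
      Dx F z = deriv (fun s : ℝ => F ((s : ℂ) + (z.im : ℂ) * Complex.I)) z.re)
    (hDy : ∀ (F : ℂ → ℂ) (z : ℂ),
      Dy F z = deriv (fun t : ℝ => F ((z.re : ℂ) + (t : ℂ) * Complex.I)) z.im)
    (Zb : ℂ → ℂ) (hZb : ∀ z, Zb z = (starRingEnd ℂ) (Z z)) :
    ∀ z : ℂ,
      (Dx Z z * Dx Z z + Dy Z z * Dy Z z = (starRingEnd ℂ) (Z z) - (Z z) ^ 2) ∧
      (Dx Zb z * Dx Zb z + Dy Zb z * Dy Zb z = Z z - ((starRingEnd ℂ) (Z z)) ^ 2) ∧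
      (Dx Z z * Dx Zb z + Dy Z z * Dy Zb z
        = (1 - Z z * (starRingEnd ℂ) (Z z)) / 2) := by
  intro z
  -- basic facts about j
  have harg : (2 * (Real.pi : ℂ) * Complex.I / 3) = ((2 * Real.pi / 3 : ℝ) : ℂ) * Complex.I := by
    push_cast; ring
  have h23 : (2 * Real.pi / 3 : ℝ) = Real.pi - Real.pi / 3 := by ring
  have hjre : j.re = -(1/2) := by
    rw [hj, harg, Complex.exp_ofReal_mul_I_re, h23, Real.cos_pi_sub, Real.cos_pi_div_three]
  have hjim2 : j.im ^ 2 = 3/4 := by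
    rw [hj, harg, Complex.exp_ofReal_mul_I_im, h23, Real.sin_pi_sub]
    exact Real.sq_sin_pi_div_three
  have hcsq : ((j.im : ℝ) : ℂ) ^ 2 = 3/4 := by
    rw [← Complex.ofReal_pow, hjim2]; norm_num
  have hsum : (1 : ℂ) + j + (starRingEnd ℂ) j = 0 := by
    apply Complex.ext <;>
      simp [Complex.add_re, Complex.add_im, Complex.conj_re, Complex.conj_im, hjre] <;> norm_num
  -- dot computations
  have hdot' : ∀ (w : ℂ) (s t : ℝ), dot w ((s : ℂ) + (t : ℂ) * Complex.I) = w.re * s + w.im * t := by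
    intro w s t
    rw [hdot]
    simp [Complex.mul_re]
  have hdotz : ∀ w : ℂ, dot w z = w.re * z.re + w.im * z.im := by
    intro w
    rw [hdot]
    simp [Complex.mul_re]
  -- abstract exponential
  obtain ⟨E, hE⟩ : ∃ E : ℂ → ℂ, ∀ w : ℂ,
      E w = Complex.exp (Complex.I * ((w.re * z.re + w.im * z.im : ℝ) : ℂ)) := ⟨_, fun _ => rfl⟩
  have hmul : ∀ w w' : ℂ, E w * E w' = E (w + w') := by
    intro w w'
    rw [hE, hE, hE, ← Complex.exp_add]
    congr 1
    rw [Complex.add_re, Complex.add_im]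
    push_cast; ring
  have hzero : E 0 = 1 := by rw [hE]; simp
  have hconjexp : ∀ (w ζ : ℂ), (starRingEnd ℂ) (Complex.exp (Complex.I * ((dot w ζ : ℝ) : ℂ)))
      = Complex.exp (Complex.I * ((dot (-w) ζ : ℝ) : ℂ)) := by
    intro w ζ
    have hneg : dot (-w) ζ = -dot w ζ := by rw [hdot, hdot]; simp
    rw [← Complex.exp_conj, hneg]
    congr 1
    simp [map_mul, Complex.conj_I, Complex.conj_ofReal]
  -- derivatives of the elementary exponentials
  have keyZ : ∀ w : ℂ, HasDerivAt
      (fun s : ℝ => Complex.exp (Complex.I * ((dot w ((s : ℂ) + (z.im : ℂ) * Complex.I) : ℝ) : ℂ)))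
      (E w * (Complex.I * (w.re : ℂ))) z.re := by
    intro w
    have h1 : HasDerivAt (fun s : ℝ => w.re * s + w.im * z.im) w.re z.re := by
      simpa using ((hasDerivAt_id z.re).const_mul w.re).add_const (w.im * z.im)
    have h2 := (h1.ofReal_comp.const_mul Complex.I).cexp
    simp only [hdot']
    rw [hE]
    exact h2
  have keyZy : ∀ w : ℂ, HasDerivAt
      (fun t : ℝ => Complex.exp (Complex.I * ((dot w ((z.re : ℂ) + (t : ℂ) * Complex.I) : ℝ) : ℂ)))
      (E w * (Complex.I * (w.im : ℂ))) z.im := by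
    intro w
    have h1 : HasDerivAt (fun t : ℝ => w.re * z.re + w.im * t) w.im z.im := by
      simpa using ((hasDerivAt_id z.im).const_mul w.im)
    have h2 := (h1.ofReal_comp.const_mul Complex.I).cexp
    simp only [hdot']
    rw [hE]
    exact h2
  -- values of Z and its conjugate
  have hZz : Z z = (E 1 + E j + E ((starRingEnd ℂ) j)) / 3 := by
    rw [hZ]; simp only [hdotz, hE]
  have hZb2 : ∀ ζ : ℂ, Zb ζ = (Complex.exp (Complex.I * ((dot (-1) ζ : ℝ) : ℂ))
      + Complex.exp (Complex.I * ((dot (-j) ζ : ℝ) : ℂ))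
      + Complex.exp (Complex.I * ((dot (-((starRingEnd ℂ) j)) ζ : ℝ) : ℂ))) / 3 := by
    intro ζ
    rw [hZb, hZ, map_div₀, map_add, map_add, hconjexp, hconjexp, hconjexp]
    norm_num [map_ofNat]
  have hZcz : (starRingEnd ℂ) (Z z) = (E (-1) + E (-j) + E (-((starRingEnd ℂ) j))) / 3 := by
    rw [← hZb z, hZb2]
    simp only [hdotz, hE]
  -- the four partial derivatives
  have hDxZ : Dx Z z = (E 1 * (Complex.I * ((1 : ℂ).re : ℂ)) + E j * (Complex.I * (j.re : ℂ))
      + E ((starRingEnd ℂ) j) * (Complex.I * ((((starRingEnd ℂ) j).re : ℝ) : ℂ))) / 3 := by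
    rw [hDx]
    have hfun : (fun s : ℝ => Z ((s : ℂ) + (z.im : ℂ) * Complex.I))
        = fun s : ℝ => (Complex.exp (Complex.I * ((dot 1 ((s : ℂ) + (z.im : ℂ) * Complex.I) : ℝ) : ℂ))
          + Complex.exp (Complex.I * ((dot j ((s : ℂ) + (z.im : ℂ) * Complex.I) : ℝ) : ℂ))
          + Complex.exp (Complex.I * ((dot ((starRingEnd ℂ) j) ((s : ℂ) + (z.im : ℂ) * Complex.I) : ℝ) : ℂ))) / 3 := by
      funext s; exact hZ _
    rw [hfun]
    exact ((((keyZ 1).add (keyZ j)).add (keyZ ((starRingEnd ℂ) j))).div_const 3).deriv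
  have hDyZ : Dy Z z = (E 1 * (Complex.I * ((1 : ℂ).im : ℂ)) + E j * (Complex.I * (j.im : ℂ))
      + E ((starRingEnd ℂ) j) * (Complex.I * ((((starRingEnd ℂ) j).im : ℝ) : ℂ))) / 3 := by
    rw [hDy]
    have hfun : (fun t : ℝ => Z ((z.re : ℂ) + (t : ℂ) * Complex.I))
        = fun t : ℝ => (Complex.exp (Complex.I * ((dot 1 ((z.re : ℂ) + (t : ℂ) * Complex.I) : ℝ) : ℂ))
          + Complex.exp (Complex.I * ((dot j ((z.re : ℂ) + (t : ℂ) * Complex.I) : ℝ) : ℂ))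
          + Complex.exp (Complex.I * ((dot ((starRingEnd ℂ) j) ((z.re : ℂ) + (t : ℂ) * Complex.I) : ℝ) : ℂ))) / 3 := by
      funext t; exact hZ _
    rw [hfun]
    exact ((((keyZy 1).add (keyZy j)).add (keyZy ((starRingEnd ℂ) j))).div_const 3).deriv
  have hDxZb : Dx Zb z = (E (-1) * (Complex.I * (((-1 : ℂ).re : ℝ) : ℂ)) + E (-j) * (Complex.I * (((-j).re : ℝ) : ℂ))
      + E (-((starRingEnd ℂ) j)) * (Complex.I * (((-((starRingEnd ℂ) j)).re : ℝ) : ℂ))) / 3 := by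
    rw [hDx]
    have hfun : (fun s : ℝ => Zb ((s : ℂ) + (z.im : ℂ) * Complex.I))
        = fun s : ℝ => (Complex.exp (Complex.I * ((dot (-1) ((s : ℂ) + (z.im : ℂ) * Complex.I) : ℝ) : ℂ))
          + Complex.exp (Complex.I * ((dot (-j) ((s : ℂ) + (z.im : ℂ) * Complex.I) : ℝ) : ℂ))
          + Complex.exp (Complex.I * ((dot (-((starRingEnd ℂ) j)) ((s : ℂ) + (z.im : ℂ) * Complex.I) : ℝ) : ℂ))) / 3 := by
      funext s; exact hZb2 _
    rw [hfun]
    exact ((((keyZ (-1)).add (keyZ (-j))).add (keyZ (-((starRingEnd ℂ) j)))).div_const 3).deriv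
  have hDyZb : Dy Zb z = (E (-1) * (Complex.I * (((-1 : ℂ).im : ℝ) : ℂ)) + E (-j) * (Complex.I * (((-j).im : ℝ) : ℂ))
      + E (-((starRingEnd ℂ) j)) * (Complex.I * (((-((starRingEnd ℂ) j)).im : ℝ) : ℂ))) / 3 := by
    rw [hDy]
    have hfun : (fun t : ℝ => Zb ((z.re : ℂ) + (t : ℂ) * Complex.I))
        = fun t : ℝ => (Complex.exp (Complex.I * ((dot (-1) ((z.re : ℂ) + (t : ℂ) * Complex.I) : ℝ) : ℂ))
          + Complex.exp (Complex.I * ((dot (-j) ((z.re : ℂ) + (t : ℂ) * Complex.I) : ℝ) : ℂ))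
          + Complex.exp (Complex.I * ((dot (-((starRingEnd ℂ) j)) ((z.re : ℂ) + (t : ℂ) * Complex.I) : ℝ) : ℂ))) / 3 := by
      funext t; exact hZb2 _
    rw [hfun]
    exact ((((keyZy (-1)).add (keyZy (-j))).add (keyZy (-((starRingEnd ℂ) j)))).div_const 3).deriv
  -- multiplicative relations between the exponentials
  have r1 : E 1 * E (-1) = 1 := by
    have h : (1 : ℂ) + -1 = 0 := by ring
    rw [hmul, h, hzero]
  have r2 : E j * E (-j) = 1 := by
    have h : j + -j = 0 := by ring
    rw [hmul, h, hzero]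
  have r3 : E ((starRingEnd ℂ) j) * E (-((starRingEnd ℂ) j)) = 1 := by
    have h : (starRingEnd ℂ) j + -((starRingEnd ℂ) j) = 0 := by ring
    rw [hmul, h, hzero]
  have r12 : E 1 * E j = E (-((starRingEnd ℂ) j)) := by
    rw [hmul]; congr 1; linear_combination hsum
  have r13 : E 1 * E ((starRingEnd ℂ) j) = E (-j) := by
    rw [hmul]; congr 1; linear_combination hsum
  have r23 : E j * E ((starRingEnd ℂ) j) = E (-1) := by
    rw [hmul]; congr 1; linear_combination hsum
  have s12 : E (-1) * E (-j) = E ((starRingEnd ℂ) j) := by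
    rw [hmul]; congr 1; linear_combination -hsum
  have s13 : E (-1) * E (-((starRingEnd ℂ) j)) = E j := by
    rw [hmul]; congr 1; linear_combination -hsum
  have s23 : E (-j) * E (-((starRingEnd ℂ) j)) = E 1 := by
    rw [hmul]; congr 1; linear_combination -hsum
  -- normalize the coefficients
  simp only [Complex.one_re, Complex.one_im, Complex.neg_re, Complex.neg_im,
    Complex.conj_re, Complex.conj_im, hjre] at hDxZ hDyZ hDxZb hDyZb
  push_cast at hDxZ hDyZ hDxZb hDyZb
  rw [hDxZ, hDyZ, hDxZb, hDyZb, hZcz, hZz]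
  set e1 := E 1
  set e2 := E j
  set e3 := E ((starRingEnd ℂ) j)
  set f1 := E (-1)
  set f2 := E (-j)
  set f3 := E (-((starRingEnd ℂ) j))
  set c := ((j.im : ℝ) : ℂ)
  refine ⟨?_, ?_, ?_⟩
  · linear_combination (((e1 - e2/2 - e3/2)^2 + c^2*(e2 - e3)^2)/9) * Complex.I_sq
      - ((e2 - e3)^2/9) * hcsq + (r12 + r13 + r23)/3
  · linear_combination (((f1 - f2/2 - f3/2)^2 + c^2*(f2 - f3)^2)/9) * Complex.I_sq
      - ((f2 - f3)^2/9) * hcsq + (s12 + s13 + s23)/3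
  · linear_combination -(((e1 - e2/2 - e3/2)*(f1 - f2/2 - f3/2) + c^2*(e2 - e3)*(f2 - f3))/9) * Complex.I_sq
      + ((e2 - e3)*(f2 - f3)/9) * hcsq + (r1 + r2 + r3)/6
end

section
/- If z₁, z₂, z₃ are unit complex numbers with z₁z₂z₃ = 1, then (z₁−z₂)²(z₂−z₃)²(z₃−z₁)² is a real number which is ≤ 0. -/
/-- If `z₁, z₂, z₃` are unit complex numbers with `z₁z₂z₃ = 1`, then
`(z₁-z₂)²(z₂-z₃)²(z₃-z₁)²` is a nonpositive real number. -/
theorem discriminant_nonpositive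
    (z₁ z₂ z₃ : ℂ)
    (h1 : ‖z₁‖ = 1) (h2 : ‖z₂‖ = 1) (h3 : ‖z₃‖ = 1)
    (hprod : z₁ * z₂ * z₃ = 1) :
    ((z₁ - z₂) ^ 2 * (z₂ - z₃) ^ 2 * (z₃ - z₁) ^ 2).im = 0 ∧
    ((z₁ - z₂) ^ 2 * (z₂ - z₃) ^ 2 * (z₃ - z₁) ^ 2).re ≤ 0 := by
  have n1 : z₁ ≠ 0 := by intro h; simp [h] at h1
  have n2 : z₂ ≠ 0 := by intro h; simp [h] at h2
  have n3 : z₃ ≠ 0 := by intro h; simp [h] at h3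
  have c1 : starRingEnd ℂ z₁ = z₂ * z₃ := by
    rw [(Complex.inv_eq_conj h1).symm]; field_simp; linear_combination -hprod
  have c2 : starRingEnd ℂ z₂ = z₁ * z₃ := by
    rw [(Complex.inv_eq_conj h2).symm]; field_simp; linear_combination -hprod
  have c3 : starRingEnd ℂ z₃ = z₁ * z₂ := by
    rw [(Complex.inv_eq_conj h3).symm]; field_simp; linear_combination -hprod
  set w := (z₁ - z₂) * (z₂ - z₃) * (z₃ - z₁) with hw
  have hconj : starRingEnd ℂ w = -w := by
    rw [hw]
    simp only [map_mul, map_sub, c1, c2, c3]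
    linear_combination ((z₂-z₁)*(z₃-z₂)*(z₁-z₃)) * hprod
  have hre : w.re = 0 := by
    have := congrArg Complex.re hconj
    simp [Complex.conj_re] at this
    linarith
  have heq : (z₁ - z₂) ^ 2 * (z₂ - z₃) ^ 2 * (z₃ - z₁) ^ 2 = w ^ 2 := by rw [hw]; ring
  rw [heq]
  constructor
  · simp [pow_two, Complex.mul_im, hre]
  · rw [sq, Complex.mul_re, hre]
    nlinarith [sq_nonneg w.im]
end

section
/- For the operator L^{(m)} on the unit ball of ℝ^d defined by L^{(m)}(f) = Σᵢⱼ(δᵢⱼ − xᵢxⱼ)∂ᵢ∂ⱼf − m Σᵢ xᵢ∂ᵢf, the function h(x) = (1−‖x‖²)^{−(m−1−d)/2} satisfies L^{(m)}(h) = d(m−d−1)·h on the open unit ball. -/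
open Finset

lemma sum_sq_update {d : ℕ} (x : Fin d → ℝ) (j : Fin d) (t : ℝ) :
    ∑ i, (Function.update x j t i) ^ 2 = (∑ i, x i ^ 2) - x j ^ 2 + t ^ 2 := by
  have h1 : ∑ i, (Function.update x j t i) ^ 2
      = ∑ i, Function.update (fun k => x k ^ 2) j (t ^ 2) i := by
    refine Finset.sum_congr rfl fun i _ => ?_
    rcases eq_or_ne i j with rfl | hne
    · simp
    · simp [Function.update_of_ne hne]
  rw [h1, Finset.sum_update_of_mem (Finset.mem_univ j),
    Finset.sum_eq_sum_sdiff_singleton_add (Finset.mem_univ j) (fun k => x k ^ 2)]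
  ring

lemma hasDerivAt_base (c α t0 : ℝ) (hc : c - t0 ^ 2 ≠ 0) :
    HasDerivAt (fun t : ℝ => (c - t ^ 2) ^ α) ((-(2 * t0)) * α * (c - t0 ^ 2) ^ (α - 1)) t0 := by
  have h1 : HasDerivAt (fun t : ℝ => c - t ^ 2) (-(2 * t0)) t0 := by
    simpa using (hasDerivAt_pow 2 t0).const_sub c
  exact h1.rpow_const (Or.inl hc)

/-- For the operator `L^{(m)} f = Σᵢⱼ (δᵢⱼ - xᵢxⱼ) ∂ᵢ∂ⱼ f - m Σᵢ xᵢ ∂ᵢ f` on the unit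
ball of `ℝ^d`, the function `h(x) = (1-‖x‖²)^(-(m-1-d)/2)` satisfies
`L^{(m)} h = d(m-d-1) h`. -/
theorem ball_eigenfunction
    (d : ℕ) (hd : 1 ≤ d) (m : ℝ)
    (D : Fin d → ((Fin d → ℝ) → ℝ) → (Fin d → ℝ) → ℝ)
    (hD : ∀ i (f : (Fin d → ℝ) → ℝ) (x : Fin d → ℝ),
      D i f x = deriv (fun t => f (Function.update x i t)) (x i))
    (h : (Fin d → ℝ) → ℝ)
    (hh : ∀ x : Fin d → ℝ, h x = (1 - ∑ i, x i ^ 2) ^ (-(m - 1 - d) / 2)) :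
    ∀ x : Fin d → ℝ, (∑ i, x i ^ 2) < 1 →
      (∑ i, ∑ j, ((if i = j then (1 : ℝ) else 0) - x i * x j) * D i (D j h) x)
          - m * ∑ i, x i * D i h x
        = (d : ℝ) * (m - d - 1) * h x := by
  set α : ℝ := -(m - 1 - d) / 2 with hα
  -- first derivative formula
  have hDh : ∀ (y : Fin d → ℝ), (1 - ∑ i, y i ^ 2) ≠ 0 → ∀ j,
      D j h y = α * (1 - ∑ i, y i ^ 2) ^ (α - 1) * (-(2 * y j)) := by
    intro y hy j
    rw [hD j]
    have hfun : (fun t => h (Function.update y j t))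
        = fun t => (((1 - ∑ i, y i ^ 2) + y j ^ 2) - t ^ 2) ^ α := by
      funext t
      rw [hh, sum_sq_update]
      congr 1
      ring
    rw [hfun]
    have hc : ((1 - ∑ i, y i ^ 2) + y j ^ 2) - (y j) ^ 2 ≠ 0 := by
      simpa using hy
    have hb := (hasDerivAt_base ((1 - ∑ i, y i ^ 2) + y j ^ 2) α (y j) hc).deriv
    rw [hb, show ((1 - ∑ i, y i ^ 2) + y j ^ 2) - (y j) ^ 2 = 1 - ∑ i, y i ^ 2 from by ring]
    ring
  intro x hx
  have hP : (0:ℝ) < 1 - ∑ i, x i ^ 2 := by linarith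
  have hP0 : (1 - ∑ i, x i ^ 2) ≠ 0 := ne_of_gt hP
  set s := ∑ i, x i ^ 2 with hs
  -- second derivative formula
  have hD2 : ∀ i j, D i (D j h) x =
      (if i = j then -(2*α) * (1 - s) ^ (α - 1) else 0)
        + (4*α*(α-1)) * (x i * x j) * (1 - s) ^ (α - 2) := by
    intro i j
    rw [hD i]
    have hev : (fun t => D j h (Function.update x i t)) =ᶠ[nhds (x i)]
        (fun t => α * (((1 - s + x i ^ 2) - t ^ 2)) ^ (α - 1)
          * (-(2 * (Function.update x i t j)))) := by
      have hcont : ContinuousAt (fun t : ℝ => (1 - s + x i ^ 2) - t ^ 2) (x i) := by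
        fun_prop
      have hne : ((1 - s + x i ^ 2) - (x i) ^ 2 : ℝ) ≠ 0 := by
        rw [show (1 - s + x i ^ 2) - (x i) ^ 2 = 1 - s from by ring]; exact hP0
      filter_upwards [hcont.eventually_ne hne] with t ht
      have hsum : (1 - ∑ k, (Function.update x i t k) ^ 2) = (1 - s + x i ^ 2) - t ^ 2 := by
        rw [sum_sq_update, ← hs]; ring
      rw [hDh (Function.update x i t) (by rw [hsum]; exact ht) j, hsum]
    rw [hev.deriv_eq]
    have hc : ((1 - s + x i ^ 2) - (x i) ^ 2 : ℝ) ≠ 0 := by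
      rw [show (1 - s + x i ^ 2) - (x i) ^ 2 = 1 - s from by ring]; exact hP0
    rcases eq_or_ne i j with rfl | hij
    · -- diagonal case: t ↦ α * (c - t²)^(α-1) * (-(2 t))
      have hfun : (fun t => α * (((1 - s + x i ^ 2) - t ^ 2)) ^ (α - 1)
            * (-(2 * (Function.update x i t i))))
          = fun t => α * ((((1 - s + x i ^ 2) - t ^ 2)) ^ (α - 1) * (-(2 * t))) := by
        funext t; rw [Function.update_self]; ring
      rw [hfun]
      have hu := hasDerivAt_base (1 - s + x i ^ 2) (α - 1) (x i) hc
      have hv : HasDerivAt (fun t : ℝ => -(2 * t)) (-2) (x i) := by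
        have h2 := ((hasDerivAt_id (x i)).const_mul (2:ℝ)).neg
        simp only [id_eq, mul_one] at h2
        exact h2
      have hprod := ((hu.mul hv).const_mul α).deriv
      simp only [Pi.mul_apply] at hprod
      rw [hprod, show (1 - s + x i ^ 2) - (x i) ^ 2 = 1 - s from by ring,
        show α - 1 - 1 = α - 2 from by ring, if_pos rfl]
      ring
    · have hfun : (fun t => α * (((1 - s + x i ^ 2) - t ^ 2)) ^ (α - 1)
            * (-(2 * (Function.update x i t j))))
          = fun t => (α * (-(2 * x j))) * (((1 - s + x i ^ 2) - t ^ 2)) ^ (α - 1) := by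
        funext t; rw [Function.update_of_ne (Ne.symm hij)]; ring
      rw [hfun]
      have hu := ((hasDerivAt_base (1 - s + x i ^ 2) (α - 1) (x i) hc).const_mul
        (α * (-(2 * x j)))).deriv
      rw [hu, show (1 - s + x i ^ 2) - (x i) ^ 2 = 1 - s from by ring,
        show α - 1 - 1 = α - 2 from by ring, if_neg hij]
      ring
  -- now algebra
  have hterm : ∀ i j, ((if i = j then (1:ℝ) else 0) - x i * x j) *
        ((if i = j then -(2*α) * (1 - s) ^ (α - 1) else 0)
          + (4*α*(α-1)) * (x i * x j) * (1 - s) ^ (α - 2))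
      = (if i = j then
            (-(2*α) * (1 - s) ^ (α-1) + (4*α*(α-1)) * x i ^ 2 * (1 - s) ^ (α-2)
              - x i ^ 2 * (-(2*α) * (1 - s) ^ (α-1))) else 0)
        + (-((4*α*(α-1)) * x i ^ 2 * (1 - s) ^ (α-2))) * x j ^ 2 := by
    intro i j
    rcases eq_or_ne i j with rfl | hij
    · simp only [eq_self_iff_true, if_true]; ring
    · simp only [if_neg hij]; ring
  have hinner : ∀ i, ∑ j, ((if i = j then (1:ℝ) else 0) - x i * x j) * D i (D j h) x
      = -(2*α) * (1 - s) ^ (α-1)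
        + ((4*α*(α-1)) * (1 - s) ^ (α-2) + (2*α) * (1 - s) ^ (α-1)
            - (4*α*(α-1)) * (1 - s) ^ (α-2) * s) * x i ^ 2 := by
    intro i
    simp only [hD2, hterm, Finset.sum_add_distrib, ← Finset.mul_sum]
    rw [Finset.sum_ite_eq, if_pos (Finset.mem_univ i), ← hs]
    ring
  rw [Finset.sum_congr rfl (fun i _ => hinner i)]
  have hlast : ∀ i, x i * D i h x = (α * (1 - s) ^ (α - 1) * (-2)) * x i ^ 2 := by
    intro i
    rw [hDh x (by rw [← hs]; exact hP0) i, ← hs]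
    ring
  rw [Finset.sum_congr rfl (fun i _ => hlast i)]
  rw [Finset.sum_add_distrib, Finset.sum_const, ← Finset.mul_sum, ← Finset.mul_sum, ← hs,
    Finset.card_univ, Fintype.card_fin, hh x, ← hs]
  have e1 : (1 - s) ^ (α - 1) = (1 - s) ^ (α - 2) * (1 - s) := by
    rw [show α - 1 = (α - 2) + 1 from by ring, Real.rpow_add_one hP0]
  have e0 : (1 - s) ^ α = (1 - s) ^ (α - 1) * (1 - s) := by
    nth_rewrite 1 [show α = (α - 1) + 1 from by ring]
    rw [Real.rpow_add_one hP0]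
  rw [e0, e1]
  simp only [nsmul_eq_mul]
  rw [hα]
  ring
end

section
/- On ℝ^d with the standard carré du champ Γ(f,g) = ∇f·∇g, for P(X) = ∏ᵢ(X − xᵢ) viewed as a function of x = (x₁,…,x_d) for each fixed X, one has Γ(P(X), P(Y)) = (P'(X)P(Y) − P'(Y)P(X))/(Y − X) for all X ≠ Y not equal to any xᵢ, where P' denotes the derivative in the polynomial variable. -/
open Finset

/-- On `ℝ^d` with `Γ(f,g) = ∇f·∇g`, for `P(X) = ∏ᵢ (X - xᵢ)` viewed as a function of
`x` for each fixed `X`, one has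
`Γ(P(X), P(Y)) = (P'(X)P(Y) - P'(Y)P(X))/(Y-X)`. -/
theorem gamma_characteristic_polynomial
    (d : ℕ) (x : Fin d → ℝ) (X Y : ℝ) (hXY : X ≠ Y)
    (hX : ∀ i, X ≠ x i) (hY : ∀ i, Y ≠ x i) :
    ∑ i, deriv (fun t => ∏ j, (X - Function.update x i t j)) (x i)
        * deriv (fun t => ∏ j, (Y - Function.update x i t j)) (x i)
      = (deriv (fun s => ∏ j, (s - x j)) X * (∏ j, (Y - x j))
          - deriv (fun s => ∏ j, (s - x j)) Y * (∏ j, (X - x j))) / (Y - X) := by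
  have hd : ∀ (Z : ℝ) (i : Fin d), deriv (fun t => ∏ j, (Z - Function.update x i t j)) (x i)
      = -(∏ j ∈ univ.erase i, (Z - x j)) := by
    intro Z i
    have heq : (fun t => ∏ j, (Z - Function.update x i t j))
        = fun t => (Z - t) * ∏ j ∈ univ.erase i, (Z - x j) := by
      funext t
      rw [← Finset.mul_prod_erase univ _ (mem_univ i)]
      congr 1
      · simp
      · exact Finset.prod_congr rfl fun j hj => by
          rw [Function.update_of_ne (Finset.ne_of_mem_erase hj)]
    rw [heq]
    simpa using (((hasDerivAt_id (x i)).const_sub Z).mul_const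
      (∏ j ∈ univ.erase i, (Z - x j))).deriv
  have hP : ∀ Z : ℝ, deriv (fun s => ∏ j, (s - x j)) Z
      = ∑ i, ∏ j ∈ univ.erase i, (Z - x j) := by
    intro Z
    have h : HasDerivAt (fun s : ℝ => ∏ j, (s - x j))
        (∑ i, (∏ j ∈ univ.erase i, (Z - x j)) • (1:ℝ)) Z :=
      HasDerivAt.fun_finsetProd fun i _ => (hasDerivAt_id Z).sub_const (x i)
    simpa using h.deriv
  simp only [hd, hP]
  rw [eq_div_iff (sub_ne_zero.mpr (Ne.symm hXY))]
  rw [Finset.sum_mul, Finset.sum_mul, Finset.sum_mul, ← Finset.sum_sub_distrib]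
  apply Finset.sum_congr rfl
  intro i _
  have hx : (∏ j, (X - x j)) = (X - x i) * ∏ j ∈ univ.erase i, (X - x j) :=
    (Finset.mul_prod_erase univ _ (mem_univ i)).symm
  have hy : (∏ j, (Y - x j)) = (Y - x i) * ∏ j ∈ univ.erase i, (Y - x j) :=
    (Finset.mul_prod_erase univ _ (mem_univ i)).symm
  rw [hx, hy]; ring
end

section
/- For distinct reals x₁ < ⋯ < x_d, with P(X) = ∏ᵢ(X − xᵢ) and D = ∏_{i<j}(xᵢ − xⱼ)², the Euclidean carré du champ in the x-variables satisfies Γ(log P(X), log D) = −P''(X)/P(X) for any X not equal to any xᵢ; equivalently Γ(P(X), log D) = −P''(X). -/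
open Finset

open Finset

lemma prod_upd (d : ℕ) (x : Fin d → ℝ) (X : ℝ) (i : Fin d) (t : ℝ) :
    (∏ j, (X - Function.update x i t j))
      = (X - t) * ∏ j ∈ Finset.univ.erase i, (X - x j) := by
  have h : (fun j => X - Function.update x i t j)
      = Function.update (fun j => X - x j) i (X - t) := by
    funext j
    by_cases hj : j = i <;> simp [Function.update_apply, hj]
  calc (∏ j, (X - Function.update x i t j))
      = ∏ j, Function.update (fun j => X - x j) i (X - t) j := by
        exact Finset.prod_congr rfl (fun j _ => congrFun h j)
    _ = (X - t) * ∏ j ∈ Finset.univ.erase i, (X - x j) := by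
        rw [Finset.prod_update_of_mem (Finset.mem_univ i), Finset.sdiff_singleton_eq_erase]

lemma hasDerivAt_prodX (d : ℕ) (x : Fin d → ℝ) (X : ℝ) (i : Fin d) :
    HasDerivAt (fun t => ∏ j, (X - Function.update x i t j))
      (-(∏ j ∈ Finset.univ.erase i, (X - x j))) (x i) := by
  have h : (fun t => ∏ j, (X - Function.update x i t j))
      = fun t => (X - t) * ∏ j ∈ Finset.univ.erase i, (X - x j) := by
    funext t; exact prod_upd d x X i t
  rw [h]
  simpa using ((hasDerivAt_id (x i)).const_sub X).mul_const
    (∏ j ∈ Finset.univ.erase i, (X - x j))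

lemma deriv_logP (d : ℕ) (x : Fin d → ℝ) (X : ℝ) (i : Fin d)
    (hne : ∀ j, X - x j ≠ 0) :
    deriv (fun t => Real.log (∏ j, (X - Function.update x i t j))) (x i)
      = -(X - x i)⁻¹ := by
  have hC : (∏ j ∈ Finset.univ.erase i, (X - x j)) ≠ 0 :=
    Finset.prod_ne_zero_iff.2 fun j _ => hne j
  have h0 : (∏ j, (X - Function.update x i (x i) j)) ≠ 0 := by
    rw [prod_upd]; exact mul_ne_zero (hne i) hC
  rw [((hasDerivAt_prodX d x X i).log h0).deriv, prod_upd]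
  rw [neg_div, mul_comm, div_mul_cancel_left₀ hC]

lemma deriv_prodX (d : ℕ) (x : Fin d → ℝ) (X : ℝ) (i : Fin d) :
    deriv (fun t => ∏ j, (X - Function.update x i t j)) (x i)
      = -(∏ j ∈ Finset.univ.erase i, (X - x j)) :=
  (hasDerivAt_prodX d x X i).deriv


lemma deriv_logD (d : ℕ) (x : Fin d → ℝ)
    (hx : ∀ j k : Fin d, j ≠ k → x j - x k ≠ 0)
    (Dd : (Fin d → ℝ) → ℝ)
    (hDd : ∀ y : Fin d → ℝ,
      Dd y = ∏ k, ∏ j ∈ Finset.univ.filter (fun j => k < j), (y k - y j) ^ 2)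
    (i : Fin d) :
    deriv (fun t => Real.log (Dd (Function.update x i t))) (x i)
      = ∑ j ∈ Finset.univ.erase i, 2 * (x i - x j)⁻¹ := by
  classical
  set S : Finset ((_ : Fin d) × Fin d) :=
    (Finset.univ : Finset (Fin d)).sigma (fun k => Finset.univ.filter (fun j => k < j)) with hSdef
  have hmemS : ∀ p ∈ S, p.1 < p.2 := by
    intro p hp
    simp [hSdef, Finset.mem_sigma, Finset.mem_filter] at hp
    exact hp
  have hS : ∀ y : Fin d → ℝ, Dd y = ∏ p ∈ S, (y p.1 - y p.2) ^ 2 := by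
    intro y; rw [hDd]; exact Finset.prod_sigma' _ _ _
  set e : Fin d → ℝ := fun k => if k = i then 1 else 0 with he
  set F' : (Σ _ : Fin d, Fin d) → ℝ :=
    fun p => 2 * (x p.1 - x p.2) * (e p.1 - e p.2) with hF'def
  have hupd : ∀ (k : Fin d) (t : ℝ), Function.update x i t k = x k + (t - x i) * e k := by
    intro k t; by_cases hk : k = i <;> simp [Function.update_apply, hk, he]
  have hF : ∀ p ∈ S, HasDerivAt
      (fun t => (Function.update x i t p.1 - Function.update x i t p.2) ^ 2) (F' p) (x i) := by
    intro p _
    have heq : (fun t => (Function.update x i t p.1 - Function.update x i t p.2) ^ 2)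
        = fun t => ((x p.1 - x p.2) + (t - x i) * (e p.1 - e p.2)) ^ 2 := by
      funext t; rw [hupd, hupd]; ring
    rw [heq]
    have h1 : HasDerivAt (fun t : ℝ => (x p.1 - x p.2) + (t - x i) * (e p.1 - e p.2))
        (e p.1 - e p.2) (x i) := by
      simpa using (((hasDerivAt_id (x i)).sub_const (x i)).mul_const (e p.1 - e p.2)).const_add
        (x p.1 - x p.2)
    have := h1.fun_pow 2
    simpa [hF'def] using this.congr_deriv (by push_cast; ring)
  have hgd : HasDerivAt (fun t => ∏ p ∈ S, (Function.update x i t p.1 - Function.update x i t p.2) ^ 2)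
      (∑ p ∈ S, (∏ q ∈ S.erase p, (x q.1 - x q.2) ^ 2) * F' p) (x i) := by
    have := HasDerivAt.fun_finsetProd hF
    simpa [Function.update_eq_self, smul_eq_mul] using this
  have hcne : ∀ p ∈ S, (x p.1 - x p.2) ^ 2 ≠ 0 := fun p hp =>
    pow_ne_zero _ (hx _ _ (ne_of_lt (hmemS p hp)))
  have hg0 : (∏ p ∈ S, (x p.1 - x p.2) ^ 2) ≠ 0 := Finset.prod_ne_zero_iff.2 hcne
  have hfun : (fun t => Real.log (Dd (Function.update x i t)))
      = fun t => Real.log (∏ p ∈ S, (Function.update x i t p.1 - Function.update x i t p.2) ^ 2) := by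
    funext t; rw [hS]
  have hval0 : (∏ p ∈ S, (Function.update x i (x i) p.1 - Function.update x i (x i) p.2) ^ 2) ≠ 0 := by
    simpa [Function.update_eq_self] using hg0
  have hder := (hgd.log hval0).deriv
  rw [hfun, hder]
  simp only [Function.update_eq_self]
  -- now: (∑ p ∈ S, (∏ q ∈ S.erase p, ...) * F' p) / (∏ p ∈ S, ...) = ∑ j ...
  rw [Finset.sum_div]
  have hterm : ∀ p ∈ S, (∏ q ∈ S.erase p, (x q.1 - x q.2) ^ 2) * F' p
      / (∏ p ∈ S, (x p.1 - x p.2) ^ 2)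
      = 2 * (e p.1 - e p.2) * (x p.1 - x p.2)⁻¹ := by
    intro p hp
    rw [← Finset.mul_prod_erase S _ hp]
    have hA : (∏ q ∈ S.erase p, (x q.1 - x q.2) ^ 2) ≠ 0 :=
      Finset.prod_ne_zero_iff.2 fun q hq => hcne q (Finset.mem_of_mem_erase hq)
    rw [mul_comm ((x p.1 - x p.2) ^ 2) _, mul_div_mul_left _ _ hA, hF'def]
    have hx2 : x p.1 - x p.2 ≠ 0 := hx _ _ (ne_of_lt (hmemS p hp))
    field_simp
  rw [Finset.sum_congr rfl hterm]
  -- sum over sigma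
  rw [hSdef, Finset.sum_sigma]
  -- split outer sum at k = i
  rw [← Finset.add_sum_erase _ _ (Finset.mem_univ i)]
  have hinner_i : (∑ l ∈ Finset.univ.filter (fun j => i < j),
      2 * (e i - e l) * (x i - x l)⁻¹) = ∑ l ∈ Finset.univ.filter (fun j => i < j),
      2 * (x i - x l)⁻¹ := by
    apply Finset.sum_congr rfl
    intro l hl
    have : l ≠ i := ne_of_gt (Finset.mem_filter.1 hl).2
    simp [he, this]
  have hinner_k : ∀ k ∈ Finset.univ.erase i,
      (∑ l ∈ Finset.univ.filter (fun j => k < j), 2 * (e k - e l) * (x k - x l)⁻¹)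
      = if k < i then 2 * (x i - x k)⁻¹ else 0 := by
    intro k hk
    have hki : k ≠ i := (Finset.mem_erase.1 hk).1
    have : (∑ l ∈ Finset.univ.filter (fun j => k < j), 2 * (e k - e l) * (x k - x l)⁻¹)
        = ∑ l ∈ Finset.univ.filter (fun j => k < j),
            if l = i then 2 * (x i - x k)⁻¹ else 0 := by
      apply Finset.sum_congr rfl
      intro l _
      by_cases hli : l = i
      · subst hli
        have hne := hx k l hki
        simp only [he, if_neg hki, if_pos rfl]
        rw [show x k - x l = -(x l - x k) by ring, inv_neg]
        simp only [if_true]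
        ring
      · simp [he, hki, hli]
    rw [this, Finset.sum_ite_eq' _ i _]
    simp [Finset.mem_filter]
  rw [hinner_i, Finset.sum_congr rfl hinner_k]
  rw [Finset.sum_ite, Finset.sum_const_zero, add_zero]
  have hfilt : (Finset.univ.erase i).filter (fun k => k < i) = Finset.univ.filter (fun k => k < i) := by
    ext k
    simp only [Finset.mem_filter, Finset.mem_erase, Finset.mem_univ, true_and, and_true]
    exact ⟨fun h => h.2, fun h => ⟨ne_of_lt h, h⟩⟩
  rw [hfilt]
  -- RHS split
  have hsplit : (Finset.univ.erase i) = Finset.univ.filter (fun k => k < i)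
      ∪ Finset.univ.filter (fun k => i < k) := by
    ext k
    simp only [Finset.mem_erase, Finset.mem_univ, true_and, and_true, Finset.mem_union,
      Finset.mem_filter]
    exact ⟨fun h => h.lt_or_gt, fun h => by rcases h with h | h; exact ne_of_lt h; exact ne_of_gt h⟩
  rw [hsplit, Finset.sum_union]
  · exact add_comm _ _
  · rw [Finset.disjoint_filter]
    intro k _ h1 h2
    exact absurd (h1.trans h2) (lt_irrefl k)


lemma deriv2_P (d : ℕ) (x : Fin d → ℝ) (X : ℝ)
    (P : ℝ → ℝ) (hP : ∀ s : ℝ, P s = ∏ j, (s - x j)) :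
    deriv (deriv P) X
      = ∑ i, ∑ j ∈ Finset.univ.erase i,
          ∏ k ∈ (Finset.univ.erase i).erase j, (X - x k) := by
  have hP1 : ∀ s : ℝ, HasDerivAt P (∑ i, ∏ j ∈ Finset.univ.erase i, (s - x j)) s := by
    intro s
    have hfun : P = fun s => ∏ j, (s - x j) := funext hP
    rw [hfun]
    have := HasDerivAt.fun_finsetProd (u := Finset.univ)
      (f := fun (j : Fin d) (s : ℝ) => s - x j) (f' := fun _ => 1)
      (fun j _ => (hasDerivAt_id s).sub_const (x j))
    simpa using this
  have hderiv1 : deriv P = fun s => ∑ i, ∏ j ∈ Finset.univ.erase i, (s - x j) :=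
    funext fun s => (hP1 s).deriv
  rw [hderiv1]
  have h2 : HasDerivAt (fun s => ∑ i, ∏ j ∈ Finset.univ.erase i, (s - x j))
      (∑ i, ∑ j ∈ Finset.univ.erase i, ∏ k ∈ (Finset.univ.erase i).erase j, (X - x k)) X := by
    apply HasDerivAt.fun_sum
    intro i _
    have := HasDerivAt.fun_finsetProd (u := Finset.univ.erase i)
      (f := fun (j : Fin d) (s : ℝ) => s - x j) (f' := fun _ => 1)
      (fun j _ => (hasDerivAt_id X).sub_const (x j))
    simpa using this
  exact h2.deriv


lemma swap_sum (d : ℕ) (f : Fin d → Fin d → ℝ) :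
    (∑ i, ∑ j ∈ Finset.univ.erase i, f i j)
      = ∑ i, ∑ j ∈ Finset.univ.erase i, f j i := by
  exact Finset.sum_comm' (by intro a b; simp [Finset.mem_erase]; exact ne_comm)

lemma key_alg (d : ℕ) (x : Fin d → ℝ) (X : ℝ)
    (hXne : ∀ j, X - x j ≠ 0) (hx : ∀ j k : Fin d, j ≠ k → x j - x k ≠ 0) :
    ∑ i, (-(X - x i)⁻¹) * ∑ j ∈ Finset.univ.erase i, 2 * (x i - x j)⁻¹
      = -∑ i, ∑ j ∈ Finset.univ.erase i, (X - x i)⁻¹ * (X - x j)⁻¹ := by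
  set g : Fin d → Fin d → ℝ := fun i j => (X - x i)⁻¹ * (2 * (x i - x j)⁻¹) with hg
  set h : Fin d → Fin d → ℝ := fun i j => (X - x i)⁻¹ * (X - x j)⁻¹ with hh
  have hL : ∑ i, (-(X - x i)⁻¹) * ∑ j ∈ Finset.univ.erase i, 2 * (x i - x j)⁻¹
      = -∑ i, ∑ j ∈ Finset.univ.erase i, g i j := by
    rw [← Finset.sum_neg_distrib]
    apply Finset.sum_congr rfl
    intro i _
    rw [Finset.mul_sum, ← Finset.sum_neg_distrib]
    apply Finset.sum_congr rfl
    intro j _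
    rw [hg]; ring
  rw [hL, neg_inj]
  have h1 := swap_sum d g
  have h2 := swap_sum d h
  have sumadd : ∀ f₁ f₂ : Fin d → Fin d → ℝ,
      (∑ i, ∑ j ∈ Finset.univ.erase i, f₁ i j) + (∑ i, ∑ j ∈ Finset.univ.erase i, f₂ i j)
        = ∑ i, ∑ j ∈ Finset.univ.erase i, (f₁ i j + f₂ i j) := by
    intro f₁ f₂
    rw [← Finset.sum_add_distrib]
    exact Finset.sum_congr rfl fun i _ => (Finset.sum_add_distrib).symm
  have hmid : (∑ i, ∑ j ∈ Finset.univ.erase i, (g i j + g j i))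
      = ∑ i, ∑ j ∈ Finset.univ.erase i, (h i j + h j i) := by
    apply Finset.sum_congr rfl
    intro i _
    apply Finset.sum_congr rfl
    intro j hj
    have hji : j ≠ i := (Finset.mem_erase.1 hj).1
    have h1 := hXne i
    have h2 := hXne j
    have h3 := hx i j (Ne.symm hji)
    have h4 := hx j i hji
    rw [hg, hh]
    field_simp
    ring
  have e1 : (∑ i, ∑ j ∈ Finset.univ.erase i, g i j)
      + (∑ i, ∑ j ∈ Finset.univ.erase i, g i j)
      = (∑ i, ∑ j ∈ Finset.univ.erase i, h i j)
      + (∑ i, ∑ j ∈ Finset.univ.erase i, h i j) := by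
    calc _ = (∑ i, ∑ j ∈ Finset.univ.erase i, g i j)
          + (∑ i, ∑ j ∈ Finset.univ.erase i, g j i) := by rw [← h1]
      _ = ∑ i, ∑ j ∈ Finset.univ.erase i, (g i j + g j i) := sumadd _ _
      _ = ∑ i, ∑ j ∈ Finset.univ.erase i, (h i j + h j i) := hmid
      _ = (∑ i, ∑ j ∈ Finset.univ.erase i, h i j)
          + (∑ i, ∑ j ∈ Finset.univ.erase i, h j i) := (sumadd _ _).symm
      _ = _ := by rw [← h2]
  linarith


/-- For distinct reals `x₁ < ⋯ < x_d`, `P(X) = ∏ᵢ (X - xᵢ)` and the discriminant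
`D = ∏_{i<j} (xᵢ - xⱼ)²`, one has `Γ(log P(X), log D) = -P''(X)/P(X)`, equivalently
`Γ(P(X), log D) = -P''(X)`, where `Γ` is the Euclidean carré du champ in `x`. -/
theorem gamma_log_discriminant
    (d : ℕ) (x : Fin d → ℝ) (hmono : ∀ i j : Fin d, i < j → x i < x j)
    (X : ℝ) (hX : ∀ i, X ≠ x i)
    (P : ℝ → ℝ) (hP : ∀ s : ℝ, P s = ∏ j, (s - x j))
    (Dd : (Fin d → ℝ) → ℝ)
    (hDd : ∀ y : Fin d → ℝ,
      Dd y = ∏ i, ∏ j ∈ Finset.univ.filter (fun j => i < j), (y i - y j) ^ 2) :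
    (∑ i, deriv (fun t => Real.log (∏ j, (X - Function.update x i t j))) (x i)
        * deriv (fun t => Real.log (Dd (Function.update x i t))) (x i)
      = - deriv (deriv P) X / P X) ∧
    (∑ i, deriv (fun t => ∏ j, (X - Function.update x i t j)) (x i)
        * deriv (fun t => Real.log (Dd (Function.update x i t))) (x i)
      = - deriv (deriv P) X) := by
  have hxne : ∀ j k : Fin d, j ≠ k → x j - x k ≠ 0 := by
    intro j k hjk
    rcases hjk.lt_or_gt with h | h
    · exact sub_ne_zero_of_ne (ne_of_lt (hmono j k h))
    · exact sub_ne_zero_of_ne (ne_of_gt (hmono k j h))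
  have hXne : ∀ j, X - x j ≠ 0 := fun j => sub_ne_zero_of_ne (hX j)
  have hPX0 : P X ≠ 0 := by
    rw [hP X]; exact Finset.prod_ne_zero_iff.2 fun j _ => hXne j
  have hprodE : ∀ i : Fin d, (∏ j ∈ Finset.univ.erase i, (X - x j)) = P X * (X - x i)⁻¹ := by
    intro i
    rw [hP X, ← Finset.mul_prod_erase Finset.univ _ (Finset.mem_univ i)]
    field_simp
    rw [eq_div_iff (hXne i)]
  -- second derivative of P
  have hD2 : deriv (deriv P) X
      = P X * ∑ i, ∑ j ∈ Finset.univ.erase i, (X - x i)⁻¹ * (X - x j)⁻¹ := by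
    rw [deriv2_P d x X P hP, Finset.mul_sum]
    apply Finset.sum_congr rfl
    intro i _
    rw [Finset.mul_sum]
    apply Finset.sum_congr rfl
    intro j hj
    have hPfac : P X = (X - x i) * ((X - x j)
        * ∏ k ∈ (Finset.univ.erase i).erase j, (X - x k)) := by
      rw [hP X, ← Finset.mul_prod_erase Finset.univ _ (Finset.mem_univ i),
        ← Finset.mul_prod_erase (Finset.univ.erase i) _ hj]
    rw [hPfac]
    field_simp
    rw [eq_div_iff (mul_ne_zero (hXne i) (hXne j))]
    ring
  -- the carre du champ sums
  have L1 : ∑ i, deriv (fun t => Real.log (∏ j, (X - Function.update x i t j))) (x i)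
        * deriv (fun t => Real.log (Dd (Function.update x i t))) (x i)
      = ∑ i, (-(X - x i)⁻¹) * ∑ j ∈ Finset.univ.erase i, 2 * (x i - x j)⁻¹ := by
    apply Finset.sum_congr rfl
    intro i _
    rw [deriv_logP d x X i hXne, deriv_logD d x hxne Dd hDd i]
  have L2 : ∑ i, deriv (fun t => ∏ j, (X - Function.update x i t j)) (x i)
        * deriv (fun t => Real.log (Dd (Function.update x i t))) (x i)
      = P X * ∑ i, (-(X - x i)⁻¹) * ∑ j ∈ Finset.univ.erase i, 2 * (x i - x j)⁻¹ := by
    rw [Finset.mul_sum]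
    apply Finset.sum_congr rfl
    intro i _
    rw [deriv_prodX d x X i, deriv_logD d x hxne Dd hDd i, hprodE i]
    ring
  have KA := key_alg d x X hXne hxne
  constructor
  · rw [L1, KA, hD2]
    rw [mul_comm (P X) _, neg_div, mul_div_assoc, div_self hPX0, mul_one]
  · rw [L2, KA, hD2]
    ring
end
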